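/- Let r ≥ 1 and let R be a finite simple graph on s vertices with s ≤ (r + 2)/2. Then Q(R) = (r + 1 − s)·e(R) + k_3(R) − Σ_{v ∈ R} C(d_R(v), 2) ≥ 0, with equality if and only if R has no edges. -/
import Mathlib


open scoped Classical
open Finset

/-- `Q(R) = (r + 1 − s)·e(R) + k₃(R) − Σ_{v ∈ R} C(d_R(v), 2)` for a graph `R` on `s`
vertices, as an integer. -/
noncomputable def Qval (r : ℕ) {V : Type} [Fintype V] [DecidableEq V]
    (R : SimpleGraph V) : ℤ :=
  ((r : ℤ) + 1 - (Fintype.card V : ℤ)) * (R.edgeFinset.card : ℤ) +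
    ((R.cliqueFinset 3).card : ℤ) - ∑ v, (((R.degree v).choose 2 : ℕ) : ℤ)

lemma two_mul_choose_two (n : ℕ) : 2 * n.choose 2 = n * (n - 1) := by
  cases n with
  | zero => simp
  | succ m =>
    have hdvd : 2 ∣ (m + 1) * m := by
      rcases Nat.even_mul_succ_self m with ⟨k, hk⟩
      exact ⟨k, by rw [mul_comm]; omega⟩
    simp only [Nat.add_sub_cancel]
    rw [Nat.choose_two_right, Nat.add_sub_cancel, Nat.mul_div_cancel' hdvd]

/-- If `R` is a graph on `s` vertices with `s ≤ (r + 2)/2` (i.e. `2s ≤ r + 2`), then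
`Q(R) ≥ 0`, with equality if and only if `R` has no edges. -/
theorem Qval_nonneg_of_small {V : Type} [Fintype V] [DecidableEq V]
    (r : ℕ) (hr : 1 ≤ r) (R : SimpleGraph V)
    (hs : 2 * Fintype.card V ≤ r + 2) :
    0 ≤ Qval r R ∧ (Qval r R = 0 ↔ R = ⊥) := by
  set s := Fintype.card V with hsdef
  set e := R.edgeFinset.card with hedef
  -- key counting inequality in ℕ
  have hC : 2 * (∑ v, (R.degree v).choose 2) + s * (2 * e) ≤ r * (2 * e) := by
    have h1 : ∑ v, 2 * (R.degree v).choose 2 ≤ ∑ v, (s - 2) * R.degree v := by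
      apply Finset.sum_le_sum
      intro v _
      rw [two_mul_choose_two, mul_comm (s - 2)]
      apply Nat.mul_le_mul_left
      have hd : R.degree v < s := R.degree_lt_card_verts v
      omega
    rw [← Finset.mul_sum, ← Finset.mul_sum,
      SimpleGraph.sum_degrees_eq_twice_card_edges] at h1
    calc 2 * (∑ v, (R.degree v).choose 2) + s * (2 * e)
        ≤ (s - 2) * (2 * e) + s * (2 * e) := by
          exact Nat.add_le_add_right h1 _
      _ = (s - 2 + s) * (2 * e) := (Nat.add_mul _ _ _).symm
      _ ≤ r * (2 * e) := Nat.mul_le_mul_right _ (by omega)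
  have hCz : 2 * ((∑ v, (((R.degree v).choose 2 : ℕ) : ℤ))) + (s : ℤ) * (2 * e)
      ≤ (r : ℤ) * (2 * e) := by
    have := (Nat.cast_le (α := ℤ)).2 hC
    push_cast at this
    linarith
  have ht : (0 : ℤ) ≤ ((R.cliqueFinset 3).card : ℤ) := Int.natCast_nonneg _
  have hQe : (e : ℤ) ≤ Qval r R := by
    unfold Qval
    rw [← hsdef, ← hedef]
    linarith
  have he0 : (0 : ℤ) ≤ (e : ℤ) := Int.natCast_nonneg _
  refine ⟨le_trans he0 hQe, ?_, ?_⟩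
  · intro hQ
    have : (e : ℤ) ≤ 0 := hQ ▸ hQe
    have he : e = 0 := by exact_mod_cast le_antisymm this he0
    have : R.edgeFinset = ∅ := Finset.card_eq_zero.mp he
    exact SimpleGraph.edgeFinset_eq_empty.mp this
  · intro hbot
    subst hbot
    have h3 : #((⊥ : SimpleGraph V).cliqueFinset 3) = 0 :=
      Finset.card_eq_zero.mpr (SimpleGraph.cliqueFinset_eq_empty_iff.mpr
        (SimpleGraph.cliqueFree_bot (by norm_num)))
    have h3 : ∀ (inst : DecidableRel (⊥ : SimpleGraph V).Adj),
        #(@SimpleGraph.cliqueFinset V ⊥ _ _ inst 3) = 0 := by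
      intro inst
      rw [Finset.card_eq_zero, SimpleGraph.cliqueFinset_eq_empty_iff]
      exact SimpleGraph.cliqueFree_bot (by norm_num)
    have hdeg : ∀ (v : V) (inst : Fintype ((⊥ : SimpleGraph V).neighborSet v)),
        @SimpleGraph.degree V ⊥ v inst = 0 := by
      intro v inst
      rw [← SimpleGraph.card_neighborSet_eq_degree]
      have : IsEmpty ((⊥ : SimpleGraph V).neighborSet v) := by
        constructor
        rintro ⟨w, hw⟩
        exact hw
      exact Fintype.card_eq_zero
    simp [Qval, h3, hdeg]
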